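/- Let r₀ > 0 and γ > 0 satisfy r₀·γ ≥ 1, and define h : [r₀, ∞) → ℝ by h(x) := 2x(√x − √r₀) / (2√r₀·(γx − 1) + √x). Then: (i) the denominator 2√r₀·(γx − 1) + √x is strictly positive for every x ≥ r₀; (ii) h(r₀) = 0 and h(x) > 0 for x > r₀; (iii) h is strictly increasing on [r₀, ∞); (iv) h(x) → ∞ as x → ∞; and (v) h(x)/(x − r₀) → 1/(2γr₀ − 1) as x ↓ r₀, and this limit is ≤ 1 (strictly less than 1 when r₀·γ > 1). -/

import Mathlib

theorem one_jump_key (s u v γ : ℝ) (hs : 0 < s) (hu : s ≤ u) (huv : u < v) (hγ : 1 ≤ s^2 * γ) :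
    2*u^2*(u-s)*(2*s*(γ*v^2-1)+v) < 2*v^2*(v-s)*(2*s*(γ*u^2-1)+u) := by
  have ha : 0 ≤ u - s := sub_nonneg.mpr hu
  have hb : 0 ≤ v - s := sub_nonneg.mpr (hu.trans huv.le)
  have hP : 0 < 2*u^2*v^2 + s*(u*v*(u+v-s)) - 2*s^2*(u^2+u*v+v^2) + 2*s^3*(u+v) := by
    nlinarith [mul_nonneg (mul_nonneg (sq_nonneg (u-s)) hb) hs.le,
      mul_nonneg (mul_nonneg (sq_nonneg (v-s)) ha) hs.le,
      mul_nonneg (mul_nonneg ha hb) (mul_pos hs hs).le,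
      mul_nonneg (mul_nonneg ha ha) (mul_pos hs hs).le,
      mul_nonneg (mul_nonneg hb hb) (mul_pos hs hs).le,
      mul_nonneg ha (mul_pos (mul_pos hs hs) hs).le,
      mul_nonneg hb (mul_pos (mul_pos hs hs) hs).le,
      mul_nonneg (mul_nonneg ha ha) (mul_nonneg hb hb),
      pow_pos hs 4]
  have hle : 2*u^2*v^2 + s*(u*v*(u+v-s)) - 2*s^2*(u^2+u*v+v^2) + 2*s^3*(u+v)
      ≤ s * (2*s*γ*(u^2*v^2) + u*v*(u+v-s) - 2*s*(u^2+u*v+v^2) + 2*s^2*(u+v)) := by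
    nlinarith [mul_nonneg (sub_nonneg.mpr hγ) (mul_nonneg (sq_nonneg u) (sq_nonneg v))]
  have hB : 0 < 2*s*γ*(u^2*v^2) + u*v*(u+v-s) - 2*s*(u^2+u*v+v^2) + 2*s^2*(u+v) := by
    have := hP.trans_le hle
    nlinarith [this, hs]
  nlinarith [mul_pos (sub_pos.mpr huv) hB]

/-- Properties of `h(x) = 2x(√x − √r₀)/(2√r₀(γx − 1) + √x)` on `[r₀, ∞)` when
`r₀ > 0`, `γ > 0` and `r₀γ ≥ 1`: the denominator is positive, `h(r₀) = 0` and
`h > 0` past `r₀`, `h` is strictly increasing, `h(x) → ∞` as `x → ∞`, and the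
initial slope `h(x)/(x − r₀) → 1/(2γr₀ − 1) ≤ 1` as `x ↓ r₀` (with strict
inequality when `r₀γ > 1`). -/
theorem one_jump_h_properties (r₀ γ : ℝ) (hr₀ : 0 < r₀) (hγ : 0 < γ)
    (hrγ : 1 ≤ r₀ * γ) (h : ℝ → ℝ)
    (hh : ∀ x, h x = 2 * x * (Real.sqrt x - Real.sqrt r₀) /
        (2 * Real.sqrt r₀ * (γ * x - 1) + Real.sqrt x)) :
    (∀ x : ℝ, r₀ ≤ x → 0 < 2 * Real.sqrt r₀ * (γ * x - 1) + Real.sqrt x) ∧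
    (h r₀ = 0 ∧ ∀ x : ℝ, r₀ < x → 0 < h x) ∧
    StrictMonoOn h (Set.Ici r₀) ∧
    Filter.Tendsto h Filter.atTop Filter.atTop ∧
    (Filter.Tendsto (fun x => h x / (x - r₀)) (nhdsWithin r₀ (Set.Ioi r₀))
        (nhds (1 / (2 * γ * r₀ - 1))) ∧
      1 / (2 * γ * r₀ - 1) ≤ 1 ∧
      (1 < r₀ * γ → 1 / (2 * γ * r₀ - 1) < 1)) := by
  set s := Real.sqrt r₀ with hsdef
  have hs : 0 < s := Real.sqrt_pos.mpr hr₀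
  have hs2 : s ^ 2 = r₀ := Real.sq_sqrt hr₀.le
  have hsγ : 1 ≤ s ^ 2 * γ := by rw [hs2]; exact hrγ
  -- denominator positivity
  have hden : ∀ x : ℝ, r₀ ≤ x → 0 < 2 * s * (γ * x - 1) + Real.sqrt x := by
    intro x hx
    have hx0 : 0 < x := lt_of_lt_of_le hr₀ hx
    have h1 : 0 ≤ γ * x - 1 := by nlinarith
    have h2 : 0 < Real.sqrt x := Real.sqrt_pos.mpr hx0
    nlinarith [mul_nonneg (by positivity : (0:ℝ) ≤ 2 * s) h1]
  -- sqrt facts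
  have hsqx : ∀ x : ℝ, r₀ ≤ x → s ≤ Real.sqrt x := fun x hx => Real.sqrt_le_sqrt hx
  have hzero : h r₀ = 0 := by rw [hh]; simp [hsdef]
  have hpos : ∀ x : ℝ, r₀ < x → 0 < h x := by
    intro x hx
    have hnum : 0 < 2 * x * (Real.sqrt x - s) := by
      have : s < Real.sqrt x := Real.sqrt_lt_sqrt hr₀.le hx
      have hx0 : 0 < x := hr₀.trans hx
      nlinarith
    rw [hh]
    exact div_pos hnum (hden x hx.le)
  have hmono : StrictMonoOn h (Set.Ici r₀) := by
    intro x hx y hy hxy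
    rw [hh, hh]
    have hx0 : 0 < x := lt_of_lt_of_le hr₀ hx
    have hy0 : 0 < y := lt_of_lt_of_le hr₀ hy
    have hu : s ≤ Real.sqrt x := hsqx x hx
    have huv : Real.sqrt x < Real.sqrt y := Real.sqrt_lt_sqrt hx0.le hxy
    have hux : (Real.sqrt x) ^ 2 = x := Real.sq_sqrt hx0.le
    have huy : (Real.sqrt y) ^ 2 = y := Real.sq_sqrt hy0.le
    rw [div_lt_div_iff₀ (hden x hx) (hden y hy)]
    have key := one_jump_key s (Real.sqrt x) (Real.sqrt y) γ hs hu huv hsγ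
    rw [hux, huy] at key
    nlinarith [key]
  -- tendsto atTop
  have htop : Filter.Tendsto h Filter.atTop Filter.atTop := by
    have hc : 0 < 2 * s * γ + 1 := by positivity
    have hsqrt_top : Filter.Tendsto Real.sqrt Filter.atTop Filter.atTop := by
      apply Filter.tendsto_atTop_atTop.mpr
      intro b
      refine ⟨(max b 0) ^ 2, fun x hx => le_trans (le_max_left b 0) ?_⟩
      rw [← Real.sqrt_sq (le_max_right b 0)]
      exact Real.sqrt_le_sqrt hx
    have hbase : Filter.Tendsto (fun x => Real.sqrt x / (2 * s * γ + 1))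
        Filter.atTop Filter.atTop :=
      Filter.Tendsto.atTop_div_const hc hsqrt_top
    apply Filter.tendsto_atTop_mono' _ _ hbase
    filter_upwards [Filter.eventually_ge_atTop (max (max r₀ 1) (4 * s ^ 2))] with x hx
    have hxr : r₀ ≤ x := le_trans (le_trans (le_max_left _ _) (le_max_left _ _)) hx
    have hx1 : (1:ℝ) ≤ x := le_trans (le_trans (le_max_right _ _) (le_max_left _ _)) hx
    have hx4 : 4 * s ^ 2 ≤ x := le_trans (le_max_right _ _) hx
    have hx0 : 0 < x := lt_of_lt_of_le hr₀ hxr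
    have hsx : 0 < Real.sqrt x := Real.sqrt_pos.mpr hx0
    have hsx2 : (Real.sqrt x) ^ 2 = x := Real.sq_sqrt hx0.le
    have h2s : 2 * s ≤ Real.sqrt x := by
      have : Real.sqrt (4 * s ^ 2) ≤ Real.sqrt x := Real.sqrt_le_sqrt hx4
      rwa [show (4 : ℝ) * s ^ 2 = (2 * s) ^ 2 by ring, Real.sqrt_sq (by positivity)] at this
    have hsqle : Real.sqrt x ≤ x := by nlinarith [hsx2, Real.sqrt_le_sqrt hx1, Real.sqrt_one]
    have hnum : x * Real.sqrt x ≤ 2 * x * (Real.sqrt x - s) := by nlinarith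
    have hdenle : 2 * s * (γ * x - 1) + Real.sqrt x ≤ (2 * s * γ + 1) * x := by nlinarith
    rw [hh]
    calc Real.sqrt x / (2 * s * γ + 1) = x * Real.sqrt x / ((2 * s * γ + 1) * x) := by
          field_simp
      _ ≤ 2 * x * (Real.sqrt x - s) / (2 * s * (γ * x - 1) + Real.sqrt x) :=
          div_le_div₀ (by nlinarith) hnum (hden x hxr) hdenle
  -- initial slope
  have h2γr : (1:ℝ) ≤ 2 * γ * r₀ - 1 := by nlinarith
  have h2γr0 : (0:ℝ) < 2 * γ * r₀ - 1 := lt_of_lt_of_le one_pos h2γr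
  have hslope : Filter.Tendsto (fun x => h x / (x - r₀)) (nhdsWithin r₀ (Set.Ioi r₀))
      (nhds (1 / (2 * γ * r₀ - 1))) := by
    set g : ℝ → ℝ := fun x =>
      2 * x / ((Real.sqrt x + s) * (2 * s * (γ * x - 1) + Real.sqrt x)) with hg
    have heq : ∀ x ∈ Set.Ioi r₀, h x / (x - r₀) = g x := by
      intro x hx
      rw [Set.mem_Ioi] at hx
      have hx0 : 0 < x := hr₀.trans hx
      have hsx : s < Real.sqrt x := Real.sqrt_lt_sqrt hr₀.le hx
      have hsx2 : (Real.sqrt x) ^ 2 = x := Real.sq_sqrt hx0.le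
      have hd := hden x hx.le
      have htne : Real.sqrt x - s ≠ 0 := sub_ne_zero.mpr (ne_of_gt hsx)
      have hsx0 : 0 < Real.sqrt x := hs.trans hsx
      have hfac : x - r₀ = (Real.sqrt x - s) * (Real.sqrt x + s) := by
        linear_combination hs2 - hsx2
      rw [hh, hg, hfac, div_div]
      rw [div_eq_div_iff
        (mul_ne_zero (ne_of_gt hd) (mul_ne_zero htne (by positivity)))
        (ne_of_gt (mul_pos (by positivity) hd))]
      ring
    have hgc : Filter.Tendsto g (nhdsWithin r₀ (Set.Ioi r₀)) (nhds (g r₀)) := by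
      apply ContinuousAt.continuousWithinAt
      have hsc : ContinuousAt Real.sqrt r₀ := Real.continuous_sqrt.continuousAt
      have hdc : ContinuousAt (fun x => (Real.sqrt x + s) * (2 * s * (γ * x - 1) + Real.sqrt x)) r₀ := by
        fun_prop
      have hdne : (Real.sqrt r₀ + s) * (2 * s * (γ * r₀ - 1) + Real.sqrt r₀) ≠ 0 := by
        have := hden r₀ le_rfl
        rw [← hsdef] at this ⊢
        positivity
      exact ContinuousAt.div (by fun_prop) hdc hdne
    have hgval : g r₀ = 1 / (2 * γ * r₀ - 1) := by
      rw [hg]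
      simp only [← hsdef]
      rw [div_eq_div_iff
        (ne_of_gt (mul_pos (by positivity) (hden r₀ le_rfl)))
        (ne_of_gt h2γr0)]
      linear_combination (2 - 4 * γ * r₀) * hs2
    rw [← hgval]
    exact hgc.congr' (Filter.eventuallyEq_of_mem self_mem_nhdsWithin fun x hx => (heq x hx).symm)
  refine ⟨hden, ⟨hzero, hpos⟩, hmono, htop, hslope, ?_, ?_⟩
  · rw [div_le_one h2γr0]; exact h2γr
  · intro hlt
    rw [div_lt_one h2γr0]
    nlinarith
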